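/- Every extreme point of the polytope F_n is the cycle flow f_γ of some simple directed cycle γ in the de Bruijn graph B(n−1,s); consequently, every n-gram distribution satisfying flow balance is a convex combination of cycle flows of simple directed cycles. -/
import Mathlib


/-!
`n`-gram distributions and flow balance on the de Bruijn graph.

We fix a finite alphabet `σ` with `s = |σ| ≥ 2` and an order `n = k + 1 ≥ 2`
(so contexts have length `k = n − 1 ≥ 1`).  An `n`-gram is a function
`Fin (k+1) → σ`; a context is a function `Fin k → σ`.  For an `n`-gram `g`,
`gInit g` is its length-`k` prefix (the source vertex of the corresponding
de Bruijn edge) and `gTail g` its length-`k` suffix (the target vertex).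
The `n`-gram `c·a` is `Fin.snoc c a` and `x·c` is `Fin.cons x c`; the shift
`σ(c,a)` is `gTail (Fin.snoc c a)`.
-/

open Finset

variable {σ : Type*}

/-- Length-`k` prefix of an `n`-gram (`n = k+1`): the source vertex of the edge. -/
def gInit {k : ℕ} (g : Fin (k + 1) → σ) : Fin k → σ := fun i => g i.castSucc

/-- Length-`k` suffix of an `n`-gram: the target vertex of the edge; also the
shift map, `σ(c,a) = gTail (Fin.snoc c a)`. -/
def gTail {k : ℕ} (g : Fin (k + 1) → σ) : Fin k → σ := fun i => g i.succ

/-- An `n`-gram distribution: nonnegative and summing to `1`. -/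
def IsDist [Fintype σ] [DecidableEq σ] {k : ℕ} (ρ : (Fin (k + 1) → σ) → ℝ) : Prop :=
  (∀ g, 0 ≤ ρ g) ∧ ∑ g, ρ g = 1

/-- `L(c) = Σ_a ρ(c·a)`: mass of `n`-grams beginning with context `c`. -/
def Lmass [Fintype σ] [DecidableEq σ] {k : ℕ}
    (ρ : (Fin (k + 1) → σ) → ℝ) (c : Fin k → σ) : ℝ :=
  ∑ a, ρ (Fin.snoc c a)

/-- `R(c) = Σ_x ρ(x·c)`: mass of `n`-grams ending with context `c`. -/
def Rmass [Fintype σ] [DecidableEq σ] {k : ℕ}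
    (ρ : (Fin (k + 1) → σ) → ℝ) (c : Fin k → σ) : ℝ :=
  ∑ x, ρ (Fin.cons x c)

/-- Flow balance: `L(c) = R(c)` for every context `c`. -/
def FlowBalance [Fintype σ] [DecidableEq σ] {k : ℕ}
    (ρ : (Fin (k + 1) → σ) → ℝ) : Prop :=
  ∀ c, Lmass ρ c = Rmass ρ c

/-- The polytope `F_n` of `n`-gram distributions satisfying flow balance
(the circulation polytope of the de Bruijn graph `B(n−1,s)`). -/
def FlowPolytope (σ : Type*) [Fintype σ] [DecidableEq σ] (k : ℕ) :
    Set ((Fin (k + 1) → σ) → ℝ) :=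
  {ρ | IsDist ρ ∧ FlowBalance ρ}

/-- A simple directed cycle in the de Bruijn graph `B(n−1,s)`: a cyclically ordered
list of `p ≥ 1` edges (`n`-grams) whose sources are pairwise distinct vertices and in
which the target of each edge is the source of the next. -/
structure SimpleCycle (σ : Type*) (k : ℕ) where
  /-- number of edges (`n`-grams) traversed -/
  p : ℕ
  ppos : 0 < p
  /-- the traversed edges, in cyclic order -/
  edge : Fin p → (Fin (k + 1) → σ)
  /-- the cycle is simple: visited vertices are pairwise distinct -/
  simple : Function.Injective fun i => gInit (edge i)
  /-- consecutive edges are incident head-to-tail (cyclically) -/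
  cyc : ∀ i : Fin p,
    gTail (edge i) = gInit (edge ⟨(i.val + 1) % p, Nat.mod_lt _ i.pos⟩)

attribute [local instance] Classical.propDecidable

/-- The cycle flow `f_γ`: the uniform distribution assigning mass `1/p` to each of the
`p` `n`-grams traversed by the simple cycle `γ`, and `0` to all others. -/
noncomputable def cycleFlow {σ : Type*} {k : ℕ} (γ : SimpleCycle σ k) :
    (Fin (k + 1) → σ) → ℝ :=
  fun g => if g ∈ Set.range γ.edge then 1 / (γ.p : ℝ) else 0


section Aux

variable [Fintype σ] [DecidableEq σ] {k : ℕ}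

lemma gInit_snoc (c : Fin k → σ) (a : σ) : gInit (Fin.snoc c a) = c := by
  funext i; simp [gInit, Fin.snoc_castSucc]

lemma gTail_cons (x : σ) (c : Fin k → σ) : gTail (Fin.cons x c) = c := by
  funext i; simp [gTail, Fin.cons_succ]

lemma snoc_gInit (g : Fin (k + 1) → σ) : Fin.snoc (gInit g) (g (Fin.last k)) = g :=
  Fin.snoc_init_self g

lemma cons_gTail (g : Fin (k + 1) → σ) : Fin.cons (g 0) (gTail g) = g :=
  Fin.cons_self_tail g

lemma edge_injective (γ : SimpleCycle σ k) : Function.Injective γ.edge :=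
  fun a b h => γ.simple (by simp only [h])

lemma cycleFlow_nonneg (γ : SimpleCycle σ k) (g : Fin (k + 1) → σ) :
    0 ≤ cycleFlow γ g := by
  unfold cycleFlow; split
  · positivity
  · exact le_refl 0

lemma cycleFlow_eq_sum (γ : SimpleCycle σ k) (g : Fin (k + 1) → σ) :
    cycleFlow γ g = ∑ i, if γ.edge i = g then 1 / (γ.p : ℝ) else 0 := by
  by_cases h : g ∈ Set.range γ.edge
  · obtain ⟨i₀, hi₀⟩ := h
    rw [cycleFlow, if_pos ⟨i₀, hi₀⟩,
      Finset.sum_eq_single i₀ (fun b _ hb => if_neg (fun hbg =>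
        hb (edge_injective γ (hbg.trans hi₀.symm))))
      (fun h' => absurd (mem_univ i₀) h'), if_pos hi₀]
  · rw [cycleFlow, if_neg h, eq_comm]
    exact Finset.sum_eq_zero fun i _ => if_neg fun hi => h ⟨i, hi⟩

lemma sum_cycleFlow (γ : SimpleCycle σ k) : ∑ g, cycleFlow γ g = 1 := by
  have hp : (γ.p : ℝ) ≠ 0 := Nat.cast_ne_zero.mpr γ.ppos.ne'
  simp only [cycleFlow_eq_sum]
  rw [Finset.sum_comm]
  have : ∀ i : Fin γ.p, (∑ g, if γ.edge i = g then 1 / (γ.p : ℝ) else 0) = 1 / γ.p := by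
    intro i
    rw [Finset.sum_ite_eq (Finset.univ) (γ.edge i) (fun _ => 1 / (γ.p : ℝ))]
    simp
  rw [Finset.sum_congr rfl fun i _ => this i, Finset.sum_const, Finset.card_univ,
    Fintype.card_fin, nsmul_eq_mul]
  field_simp

lemma Lmass_cycleFlow (γ : SimpleCycle σ k) (c : Fin k → σ) :
    Lmass (cycleFlow γ) c = ∑ i, if gInit (γ.edge i) = c then 1 / (γ.p : ℝ) else 0 := by
  unfold Lmass
  simp only [cycleFlow_eq_sum]
  rw [Finset.sum_comm]
  refine Finset.sum_congr rfl fun i _ => ?_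
  by_cases h : gInit (γ.edge i) = c
  · rw [if_pos h]
    rw [Finset.sum_eq_single (γ.edge i (Fin.last k))]
    · rw [if_pos]
      conv_lhs => rw [← snoc_gInit (γ.edge i), h]
    · intro b _ hb
      refine if_neg fun he => hb ?_
      have := congrArg (fun f => f (Fin.last k)) he
      simpa [Fin.snoc_last] using this.symm
    · intro h'; exact absurd (mem_univ _) h'
  · rw [if_neg h]
    refine Finset.sum_eq_zero fun a _ => if_neg fun he => h ?_
    rw [he, gInit_snoc]

lemma Rmass_cycleFlow (γ : SimpleCycle σ k) (c : Fin k → σ) :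
    Rmass (cycleFlow γ) c = ∑ i, if gTail (γ.edge i) = c then 1 / (γ.p : ℝ) else 0 := by
  unfold Rmass
  simp only [cycleFlow_eq_sum]
  rw [Finset.sum_comm]
  refine Finset.sum_congr rfl fun i _ => ?_
  by_cases h : gTail (γ.edge i) = c
  · rw [if_pos h]
    rw [Finset.sum_eq_single (γ.edge i 0)]
    · rw [if_pos]
      conv_lhs => rw [← cons_gTail (γ.edge i), h]
    · intro b _ hb
      refine if_neg fun he => hb ?_
      have := congrArg (fun f => f 0) he
      simpa [Fin.cons_zero] using this.symm
    · intro h'; exact absurd (mem_univ _) h'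
  · rw [if_neg h]
    refine Finset.sum_eq_zero fun x _ => if_neg fun he => h ?_
    rw [he, gTail_cons]

lemma rot_injective (p : ℕ) (hp : 0 < p) :
    Function.Injective (fun i : Fin p => (⟨(i.val + 1) % p, Nat.mod_lt _ hp⟩ : Fin p)) := by
  intro a b hab
  have h : (a.val + 1) % p = (b.val + 1) % p := congrArg Fin.val hab
  have ha := a.2; have hb := b.2
  have ha' : (a.val + 1) % p = if a.val + 1 = p then 0 else a.val + 1 := by
    split
    · simp [*]
    · exact Nat.mod_eq_of_lt (by omega)
  have hb' : (b.val + 1) % p = if b.val + 1 = p then 0 else b.val + 1 := by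
    split
    · simp [*]
    · exact Nat.mod_eq_of_lt (by omega)
  rw [ha', hb'] at h
  ext
  split at h <;> split at h <;> omega

lemma flowBalance_cycleFlow (γ : SimpleCycle σ k) : FlowBalance (cycleFlow γ) := by
  intro c
  rw [Lmass_cycleFlow, Rmass_cycleFlow]
  have hrot := rot_injective γ.p γ.ppos
  let e : Fin γ.p ≃ Fin γ.p :=
    Equiv.ofBijective _ ((Finite.injective_iff_bijective).mp hrot)
  calc ∑ i, (if gInit (γ.edge i) = c then 1 / (γ.p : ℝ) else 0)
      = ∑ i, (if gInit (γ.edge (e i)) = c then 1 / (γ.p : ℝ) else 0) :=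
        (Equiv.sum_comp e fun j => if gInit (γ.edge j) = c then 1 / (γ.p : ℝ) else 0).symm
    _ = ∑ i, (if gTail (γ.edge i) = c then 1 / (γ.p : ℝ) else 0) := by
        refine Finset.sum_congr rfl fun i _ => ?_
        have : gInit (γ.edge (e i)) = gTail (γ.edge i) := (γ.cyc i).symm
        rw [this]

lemma cycleFlow_mem (γ : SimpleCycle σ k) : cycleFlow γ ∈ FlowPolytope σ k :=
  ⟨⟨cycleFlow_nonneg γ, sum_cycleFlow γ⟩, flowBalance_cycleFlow γ⟩

lemma Lmass_combo (a b : ℝ) (ρ₁ ρ₂ : (Fin (k + 1) → σ) → ℝ) (c : Fin k → σ) :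
    Lmass (fun g => a * ρ₁ g + b * ρ₂ g) c = a * Lmass ρ₁ c + b * Lmass ρ₂ c := by
  simp [Lmass, Finset.mul_sum, Finset.sum_add_distrib]

lemma Rmass_combo (a b : ℝ) (ρ₁ ρ₂ : (Fin (k + 1) → σ) → ℝ) (c : Fin k → σ) :
    Rmass (fun g => a * ρ₁ g + b * ρ₂ g) c = a * Rmass ρ₁ c + b * Rmass ρ₂ c := by
  simp [Rmass, Finset.mul_sum, Finset.sum_add_distrib]

lemma flowBalance_combo (a b : ℝ) {ρ₁ ρ₂ : (Fin (k + 1) → σ) → ℝ}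
    (h₁ : FlowBalance ρ₁) (h₂ : FlowBalance ρ₂) :
    FlowBalance (fun g => a * ρ₁ g + b * ρ₂ g) := by
  intro c; rw [Lmass_combo, Rmass_combo, h₁ c, h₂ c]

lemma convex_flowPolytope : Convex ℝ (FlowPolytope σ k) := by
  intro x hx y hy a b ha hb hab
  obtain ⟨⟨hx0, hx1⟩, hxb⟩ := hx
  obtain ⟨⟨hy0, hy1⟩, hyb⟩ := hy
  have hfun : a • x + b • y = fun g => a * x g + b * y g := by
    funext g; simp
  refine ⟨⟨?_, ?_⟩, ?_⟩
  · intro g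
    simp only [Pi.add_apply, Pi.smul_apply, smul_eq_mul]
    have := mul_nonneg ha (hx0 g); have := mul_nonneg hb (hy0 g); linarith
  · simp only [Pi.add_apply, Pi.smul_apply, smul_eq_mul, Finset.sum_add_distrib,
      ← Finset.mul_sum, hx1, hy1]
    linarith
  · rw [hfun]; exact flowBalance_combo a b hxb hyb

/-- From any positive-flow edge, flow balance lets us extract a simple cycle all of
whose edges carry positive flow. -/
lemma exists_cycle_subset_support (ρ : (Fin (k + 1) → σ) → ℝ)
    (hnn : ∀ g, 0 ≤ ρ g) (hbal : FlowBalance ρ)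
    {g₀ : Fin (k + 1) → σ} (h₀ : 0 < ρ g₀) :
    ∃ γ : SimpleCycle σ k, ∀ i, 0 < ρ (γ.edge i) := by
  have step : ∀ g : {g : Fin (k + 1) → σ // 0 < ρ g},
      ∃ g' : Fin (k + 1) → σ, 0 < ρ g' ∧ gInit g' = gTail g.1 := by
    rintro ⟨g, hg⟩
    have hR : 0 < Rmass ρ (gTail g) := by
      have h1 : ρ g ≤ Rmass ρ (gTail g) := by
        have h2 := Finset.single_le_sum (f := fun x => ρ (Fin.cons x (gTail g)))
          (fun x _ => hnn _) (mem_univ (g 0))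
        simpa only [Rmass, cons_gTail] using h2
      linarith
    have hL : 0 < Lmass ρ (gTail g) := by rw [hbal (gTail g)]; exact hR
    have : ∃ a, ρ (Fin.snoc (gTail g) a) ≠ 0 := by
      by_contra hcon; push_neg at hcon
      rw [Lmass, Finset.sum_eq_zero (fun a _ => hcon a)] at hL
      exact lt_irrefl 0 hL
    obtain ⟨a, ha⟩ := this
    exact ⟨Fin.snoc (gTail g) a, lt_of_le_of_ne (hnn _) (Ne.symm ha), gInit_snoc _ _⟩
  let f : ℕ → {g : Fin (k + 1) → σ // 0 < ρ g} := fun n =>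
    Nat.rec ⟨g₀, h₀⟩ (fun _ prev => ⟨(step prev).choose, (step prev).choose_spec.1⟩) n
  have hf : ∀ n, gInit (f (n + 1)).1 = gTail (f n).1 := fun n => (step (f n)).choose_spec.2
  set v : ℕ → (Fin k → σ) := fun n => gInit (f n).1 with hv
  have hrep : ∃ j, ∃ i, i < j ∧ v i = v j := by
    obtain ⟨a, b, hab, h⟩ := Finite.exists_ne_map_eq_of_infinite v
    rcases hab.lt_or_gt with h' | h'
    · exact ⟨b, a, h', h⟩
    · exact ⟨a, b, h', h.symm⟩
  classical
  set j₀ := Nat.find hrep with hj₀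
  obtain ⟨i₀, hi₀lt, hveq⟩ := Nat.find_spec hrep
  set p := j₀ - i₀ with hpdef
  have hp : 0 < p := by omega
  have key : ∀ a b : ℕ, a < b → b < p → v (i₀ + a) ≠ v (i₀ + b) := by
    intro a b hab hb hveq'
    have hblt : i₀ + b < j₀ := by omega
    exact Nat.find_min hrep hblt ⟨i₀ + a, by omega, hveq'⟩
  refine ⟨⟨p, hp, fun m => (f (i₀ + m.val)).1, ?_, ?_⟩, fun i => (f (i₀ + i.val)).2⟩
  · intro a b hab
    simp only at hab
    by_contra hne
    rcases (Fin.val_ne_of_ne hne).lt_or_gt with h' | h'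
    · exact key a.val b.val h' b.2 hab
    · exact key b.val a.val h' a.2 hab.symm
  · intro m
    show gTail (f (i₀ + m.val)).1 = gInit (f (i₀ + ((m.val + 1) % p))).1
    rw [← hf (i₀ + m.val)]
    rcases eq_or_lt_of_le (Nat.succ_le_of_lt m.2) with hm | hm
    · have hm' : m.val + 1 = p := hm
      have h1 : (m.val + 1) % p = 0 := by rw [hm', Nat.mod_self]
      have h2 : i₀ + m.val + 1 = j₀ := by omega
      rw [h1, h2]
      exact (show v i₀ = v j₀ from hveq).symm
    · have h1 : (m.val + 1) % p = m.val + 1 := Nat.mod_eq_of_lt hm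
      rw [h1, ← Nat.add_assoc]

/-- Key decomposition lemma, by strong induction on the size of the support. -/
lemma decomp (N : ℕ) : ∀ ρ : (Fin (k + 1) → σ) → ℝ, ρ ∈ FlowPolytope σ k →
    (Finset.univ.filter fun g => ρ g ≠ 0).card ≤ N →
    ∃ (m : ℕ) (γs : Fin m → SimpleCycle σ k) (w : Fin m → ℝ),
      (∀ i, 0 ≤ w i) ∧ (∑ i, w i = 1) ∧
      ρ = ∑ i, w i • cycleFlow (γs i) := by
  induction N with
  | zero =>
    intro ρ hρ hcard
    exfalso
    have hempty : (Finset.univ.filter fun g => ρ g ≠ 0) = ∅ :=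
      Finset.card_eq_zero.mp (Nat.le_zero.mp hcard)
    have hz : ∀ g, ρ g = 0 := by
      intro g
      by_contra h
      have : g ∈ (Finset.univ.filter fun g => ρ g ≠ 0) := Finset.mem_filter.mpr ⟨mem_univ g, h⟩
      simp [hempty] at this
    have := hρ.1.2
    rw [Finset.sum_eq_zero (fun g _ => hz g)] at this
    norm_num at this
  | succ N ih =>
    intro ρ hρ hcard
    obtain ⟨⟨hnn, hsum⟩, hbal⟩ := hρ
    have hex : ∃ g₀, 0 < ρ g₀ := by
      by_contra h; push_neg at h
      have hz : ∀ g, ρ g = 0 := fun g => le_antisymm (h g) (hnn g)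
      rw [Finset.sum_eq_zero (fun g _ => hz g)] at hsum
      norm_num at hsum
    obtain ⟨g₀, h₀⟩ := hex
    obtain ⟨γ, hγ⟩ := exists_cycle_subset_support ρ hnn hbal h₀
    obtain ⟨i₀, -, hmin⟩ := Finset.exists_min_image Finset.univ (fun i => ρ (γ.edge i))
      ⟨⟨0, γ.ppos⟩, mem_univ _⟩
    set t := ρ (γ.edge i₀) with ht
    have htpos : 0 < t := hγ i₀
    have hmin' : ∀ i, t ≤ ρ (γ.edge i) := fun i => hmin i (mem_univ i)
    have hpR : (0 : ℝ) < γ.p := by exact_mod_cast γ.ppos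
    have hedge_inj : Function.Injective γ.edge := edge_injective γ
    have hsum_cycle : ∑ i, ρ (γ.edge i) ≤ 1 := by
      rw [← hsum]
      calc ∑ i, ρ (γ.edge i) = ∑ g ∈ Finset.univ.image γ.edge, ρ g :=
            (Finset.sum_image (fun a _ b _ h => hedge_inj h)).symm
        _ ≤ ∑ g, ρ g :=
            Finset.sum_le_sum_of_subset_of_nonneg (Finset.subset_univ _)
              (fun g _ _ => hnn g)
    have hlb : (γ.p : ℝ) * t ≤ ∑ i, ρ (γ.edge i) := by
      calc (γ.p : ℝ) * t = ∑ _i : Fin γ.p, t := by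
            rw [Finset.sum_const, Finset.card_univ, Fintype.card_fin, nsmul_eq_mul]
        _ ≤ _ := Finset.sum_le_sum (fun i _ => hmin' i)
    have htp : t * γ.p ≤ 1 := by nlinarith
    have hcfval : ∀ i, cycleFlow γ (γ.edge i) = 1 / γ.p := fun i => by
      rw [cycleFlow, if_pos ⟨i, rfl⟩]
    have hcfzero : ∀ g, g ∉ Set.range γ.edge → cycleFlow γ g = 0 := fun g hg => by
      rw [cycleFlow, if_neg hg]
    rcases eq_or_lt_of_le htp with heq | hlt
    · -- ρ is exactly the cycle flow
      have hcycsum : ∑ i, ρ (γ.edge i) = 1 := le_antisymm hsum_cycle (by nlinarith)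
      have honcycle : ∀ i, ρ (γ.edge i) = t := by
        have hzero : ∑ i, (ρ (γ.edge i) - t) = 0 := by
          rw [Finset.sum_sub_distrib, hcycsum, Finset.sum_const, Finset.card_univ,
            Fintype.card_fin, nsmul_eq_mul]
          nlinarith
        intro i
        have := (Finset.sum_eq_zero_iff_of_nonneg
          (fun i _ => sub_nonneg.mpr (hmin' i))).mp hzero i (mem_univ i)
        linarith
      have hoffsum : ∑ g ∈ Finset.univ \ Finset.univ.image γ.edge, ρ g = 0 := by
        have := Finset.sum_sdiff (f := ρ) (Finset.subset_univ (Finset.univ.image γ.edge))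
        rw [hsum] at this
        have himg : ∑ g ∈ Finset.univ.image γ.edge, ρ g = 1 := by
          rw [Finset.sum_image (fun a _ b _ h => hedge_inj h)]; exact hcycsum
        linarith
      have hoff : ∀ g, g ∉ Set.range γ.edge → ρ g = 0 := by
        intro g hg
        refine (Finset.sum_eq_zero_iff_of_nonneg (fun g _ => hnn g)).mp hoffsum g ?_
        simp only [Finset.mem_sdiff, Finset.mem_image, mem_univ, true_and]
        rintro ⟨i, hi⟩
        exact hg ⟨i, hi⟩
      have hρeq : ρ = cycleFlow γ := by
        funext g
        by_cases h : g ∈ Set.range γ.edge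
        · obtain ⟨i, hi⟩ := h
          rw [← hi, honcycle i, hcfval i]
          field_simp
          nlinarith
        · rw [hoff g h, hcfzero g h]
      exact ⟨1, fun _ => γ, fun _ => 1, fun _ => zero_le_one, by simp, by
        simp [hρeq]⟩
    · -- subtract the cycle flow and recurse
      set c : ℝ := 1 - t * γ.p with hc
      have hcpos : 0 < c := by linarith
      set ρ' : (Fin (k + 1) → σ) → ℝ :=
        fun g => c⁻¹ * ρ g + (-(c⁻¹ * (t * γ.p))) * cycleFlow γ g with hρ'def
      have hρ'nn : ∀ g, 0 ≤ ρ' g := by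
        intro g
        by_cases h : g ∈ Set.range γ.edge
        · obtain ⟨i, hi⟩ := h
          have h1 : ρ g = ρ (γ.edge i) := by rw [hi]
          have h2 : cycleFlow γ g = 1 / γ.p := by rw [← hi, hcfval i]
          have h3 : t ≤ ρ g := h1 ▸ hmin' i
          rw [hρ'def]
          simp only
          rw [h2]
          have : c⁻¹ * ρ g + -(c⁻¹ * (t * γ.p)) * (1 / γ.p) = c⁻¹ * (ρ g - t) := by
            field_simp
            ring
          rw [this]
          exact mul_nonneg (inv_nonneg.mpr hcpos.le) (by linarith)
        · rw [hρ'def]; simp only [hcfzero g h, mul_zero, add_zero]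
          exact mul_nonneg (inv_nonneg.mpr hcpos.le) (hnn g)
      have hρ'sum : ∑ g, ρ' g = 1 := by
        rw [hρ'def]
        simp only
        rw [Finset.sum_add_distrib, ← Finset.mul_sum, ← Finset.mul_sum, hsum,
          sum_cycleFlow]
        field_simp
        rw [hc]
        ring
      have hρ'bal : FlowBalance ρ' := flowBalance_combo _ _ hbal (flowBalance_cycleFlow γ)
      have hmem' : ρ' ∈ FlowPolytope σ k := ⟨⟨hρ'nn, hρ'sum⟩, hρ'bal⟩
      have hzero_supp : ∀ g, ρ g = 0 → ρ' g = 0 := by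
        intro g hg
        have hnotr : g ∉ Set.range γ.edge := by
          rintro ⟨i, hi⟩
          rw [← hi] at hg
          exact absurd hg (hγ i).ne'
        rw [hρ'def]; simp [hg, hcfzero g hnotr]
      have hpne : (γ.p : ℝ) ≠ 0 := hpR.ne'
      have hkill : ρ' (γ.edge i₀) = 0 := by
        rw [hρ'def]
        simp only [hcfval i₀, ← ht]
        field_simp
        ring
      have hsubset : (Finset.univ.filter fun g => ρ' g ≠ 0) ⊆
          (Finset.univ.filter fun g => ρ g ≠ 0).erase (γ.edge i₀) := by
        intro g hg
        rw [Finset.mem_filter] at hg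
        refine Finset.mem_erase.mpr ⟨?_, Finset.mem_filter.mpr ⟨mem_univ g, ?_⟩⟩
        · rintro rfl; exact hg.2 hkill
        · intro h0; exact hg.2 (hzero_supp g h0)
      have hcard' : (Finset.univ.filter fun g => ρ' g ≠ 0).card ≤ N := by
        have h1 : (γ.edge i₀) ∈ (Finset.univ.filter fun g => ρ g ≠ 0) :=
          Finset.mem_filter.mpr ⟨mem_univ _, (hγ i₀).ne'⟩
        have h2 := Finset.card_erase_of_mem h1
        have h3 := Finset.card_le_card hsubset
        have h4 := Finset.card_pos.mpr ⟨_, h1⟩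
        omega
      obtain ⟨m, γs, w, hw0, hw1, hρ'eq⟩ := ih ρ' hmem' hcard'
      refine ⟨m + 1, Fin.cons γ γs, Fin.cons (t * γ.p) (fun i => c * w i), ?_, ?_, ?_⟩
      · intro i
        refine Fin.cases ?_ (fun j => ?_) i
        · rw [Fin.cons_zero]
          exact le_of_lt (mul_pos htpos hpR)
        · rw [Fin.cons_succ]
          exact mul_nonneg hcpos.le (hw0 j)
      · rw [Fin.sum_univ_succ]
        simp only [Fin.cons_zero, Fin.cons_succ]
        rw [← Finset.mul_sum, hw1]
        rw [hc]
        ring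
      · funext g
        rw [Fin.sum_univ_succ]
        simp only [Fin.cons_zero, Fin.cons_succ, Pi.add_apply, Pi.smul_apply,
          smul_eq_mul]
        have h1 : ∑ i, ((c * w i) • cycleFlow (γs i)) g = c * ρ' g := by
          rw [hρ'eq]
          rw [Finset.sum_apply, Finset.mul_sum]
          refine Finset.sum_congr rfl fun i _ => ?_
          simp [mul_assoc]
        have h2 : c * ρ' g = ρ g - t * γ.p * cycleFlow γ g := by
          rw [hρ'def]
          simp only
          field_simp
          ring
        have h3 : (∑ i, (fun i => c * w i) i • cycleFlow (γs i)) g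
            = ∑ i, ((c * w i) • cycleFlow (γs i)) g := by
          rw [Finset.sum_apply]
        rw [h3, h1, h2]
        ring

end Aux

/-- Every extreme point of the polytope `F_n` is the cycle flow `f_γ`
of some simple directed cycle `γ` in the de Bruijn graph `B(n−1,s)`; consequently,
every `n`-gram distribution satisfying flow balance is a convex combination of cycle
flows of simple directed cycles. -/
theorem extremePoints_are_cycleFlows [Fintype σ] [DecidableEq σ]
    (k : ℕ) (hk : 1 ≤ k) (hs : 2 ≤ Fintype.card σ) :
    (∀ ρ ∈ Set.extremePoints ℝ (FlowPolytope σ k),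
      ∃ γ : SimpleCycle σ k, ρ = cycleFlow γ) ∧
    (∀ ρ ∈ FlowPolytope σ k,
      ∃ (m : ℕ) (γs : Fin m → SimpleCycle σ k) (w : Fin m → ℝ),
        (∀ i, 0 ≤ w i) ∧ (∑ i, w i = 1) ∧
        ρ = ∑ i, w i • cycleFlow (γs i)) := by
  have part2 : ∀ ρ ∈ FlowPolytope σ k,
      ∃ (m : ℕ) (γs : Fin m → SimpleCycle σ k) (w : Fin m → ℝ),
        (∀ i, 0 ≤ w i) ∧ (∑ i, w i = 1) ∧
        ρ = ∑ i, w i • cycleFlow (γs i) := by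
    intro ρ hρ
    exact decomp ((Finset.univ.filter fun g => ρ g ≠ 0).card) ρ hρ le_rfl
  refine ⟨?_, part2⟩
  have hset : FlowPolytope σ k
      = convexHull ℝ (Set.range (cycleFlow : SimpleCycle σ k → _)) := by
    apply Set.Subset.antisymm
    · intro ρ hρ
      obtain ⟨m, γs, w, hw0, hw1, hρeq⟩ := part2 ρ hρ
      rw [hρeq]
      exact (convex_convexHull ℝ _).sum_mem (fun i _ => hw0 i) hw1
        (fun i _ => subset_convexHull ℝ _ ⟨γs i, rfl⟩)
    · refine convexHull_min ?_ convex_flowPolytope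
      rintro _ ⟨γ, rfl⟩
      exact cycleFlow_mem γ
  intro ρ hρ
  rw [hset] at hρ
  obtain ⟨γ, hγ⟩ := extremePoints_convexHull_subset hρ
  exact ⟨γ, hγ.symm⟩
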